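/- Let α, β ∈ NC(n) with α ≪ β. Then every outer block of α is β-special; moreover, the correspondence sending each β-special block V of α to the block W of β with min(V) = min(W) and max(V) = max(W) restricts to a bijection between the outer blocks of α and the outer blocks of β. -/
import Mathlib


open scoped Classical

/-- The minimum of a finset of naturals (`0` if empty). -/
noncomputable def fmin (A : Finset ℕ) : ℕ := sInf (A : Set ℕ)

/-- The maximum of a finset of naturals (`0` if empty). -/
noncomputable def fmax (A : Finset ℕ) : ℕ := sSup (A : Set ℕ)

/-- `α` is a partition of the finite set `F ⊆ ℕ`. -/
def IsPartitionOfSet (F : Finset ℕ) (α : Finset (Finset ℕ)) : Prop :=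
  (∀ V ∈ α, V.Nonempty) ∧ (∀ V ∈ α, V ⊆ F) ∧ (∀ m ∈ F, ∃ V ∈ α, m ∈ V) ∧
    ∀ V ∈ α, ∀ W ∈ α, V ≠ W → V ∩ W = ∅

/-- `α` is a partition of `{1,…,n}`. -/
def IsPartitionOf (n : ℕ) (α : Finset (Finset ℕ)) : Prop :=
  IsPartitionOfSet (Finset.Icc 1 n) α

/-- Two distinct blocks of the family `π` cross: there are `a < b < c < d` with
`a, c` in one block and `b, d` in a different block. -/
def IsCrossing (π : Finset (Finset ℕ)) : Prop :=
  ∃ A ∈ π, ∃ B ∈ π, A ≠ B ∧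
    ∃ a ∈ A, ∃ b ∈ B, ∃ c ∈ A, ∃ d ∈ B, a < b ∧ b < c ∧ c < d

/-- `α ∈ NC(n)`: a non-crossing partition of `{1,…,n}`. -/
def IsNCPartition (n : ℕ) (α : Finset (Finset ℕ)) : Prop :=
  IsPartitionOf n α ∧ ¬ IsCrossing α

/-- Reverse refinement order `α ≤ β`: every block of `α` is contained in a block of `β`
(equivalently, every block of `β` is a union of blocks of `α`). -/
def Refines (α β : Finset (Finset ℕ)) : Prop := ∀ V ∈ α, ∃ W ∈ β, V ⊆ W

/-- The partial order `α ≪ β`: `α ≤ β` and for every block `W` of `β` there is a block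
`V` of `α` containing both `min W` and `max W`. -/
def LL (α β : Finset (Finset ℕ)) : Prop :=
  Refines α β ∧ ∀ W ∈ β, ∃ V ∈ α, fmin W ∈ V ∧ fmax W ∈ V

/-- A block `V` (of `α`) is `β`-special: some block `W` of `β` has the same min and max. -/
def SpecialBlock (β : Finset (Finset ℕ)) (V : Finset ℕ) : Prop :=
  ∃ W ∈ β, fmin V = fmin W ∧ fmax V = fmax W

/-- `V` is an outer block of `α`: no block of `α` strictly nests around it. -/
def OuterBlock (α : Finset (Finset ℕ)) (V : Finset ℕ) : Prop :=
  ∀ V' ∈ α, ¬ (fmin V' < fmin V ∧ fmax V < fmax V')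

/-- `π` is a linked partition of the finite set `F ⊆ ℕ`. -/
def IsLinkedPartitionOfSet (F : Finset ℕ) (π : Finset (Finset ℕ)) : Prop :=
  (∀ A ∈ π, A.Nonempty) ∧ (∀ A ∈ π, A ⊆ F) ∧ (∀ m ∈ F, ∃ A ∈ π, m ∈ A) ∧
    ∀ A ∈ π, ∀ B ∈ π, A ≠ B →
      A ∩ B = ∅ ∨
        (2 ≤ A.card ∧ 2 ≤ B.card ∧ (A ∩ B).card = 1 ∧ fmin A ≠ fmin B ∧
          ∀ x ∈ A ∩ B, x = fmin A ∨ x = fmin B)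

/-- `π ∈ NCL(F)`: a non-crossing linked partition of the finite set `F`. -/
def IsNCLOfSet (F : Finset ℕ) (π : Finset (Finset ℕ)) : Prop :=
  IsLinkedPartitionOfSet F π ∧ ¬ IsCrossing π

/-- `π ∈ NCL(n)`: a non-crossing linked partition of `{1,…,n}`. -/
def IsNCL (n : ℕ) (π : Finset (Finset ℕ)) : Prop :=
  IsNCLOfSet (Finset.Icc 1 n) π

/-- The number of blocks of `π` containing `m`. -/
noncomputable def coverCount (π : Finset (Finset ℕ)) (m : ℕ) : ℕ :=
  (π.filter fun A => m ∈ A).card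

/-- `m` is singly-covered by `π`: it lies in exactly one block. -/
def SinglyCovered (π : Finset (Finset ℕ)) (m : ℕ) : Prop := coverCount π m = 1

/-- `m` is doubly-covered by `π`: it lies in exactly two blocks. -/
def DoublyCovered (π : Finset (Finset ℕ)) (m : ℕ) : Prop := coverCount π m = 2

/-- The partition `π̂` generated by the blocks of `π`: its blocks are the connected
components of the ground set under the relation of lying in a common block of `π`. -/
noncomputable def genPart (π : Finset (Finset ℕ)) : Finset (Finset ℕ) :=
  (π.sup id).image fun m =>
    (π.sup id).filter fun x =>
      Relation.EqvGen (fun a b => ∃ A ∈ π, a ∈ A ∧ b ∈ A) m x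

/-- The unlinking `π̌` of a linked partition `π`. -/
noncomputable def unlink (π : Finset (Finset ℕ)) : Finset (Finset ℕ) :=
  π.image fun A => if SinglyCovered π (fmin A) then A else A.erase (fmin A)

/-- The block of `α` containing `m` (empty if there is none). -/
noncomputable def blockOf (α : Finset (Finset ℕ)) (m : ℕ) : Finset ℕ :=
  (α.filter fun V => m ∈ V).sup id

/-- The successor of `m` in the cycle on the block `V` (elements in increasing order). -/
noncomputable def nextInBlock (V : Finset ℕ) (m : ℕ) : ℕ :=
  if m = fmax V then fmin V else fmin (V.filter fun x => m < x)

/-- The predecessor of `m` in the cycle on the block `V`. -/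
noncomputable def prevInBlock (V : Finset ℕ) (m : ℕ) : ℕ :=
  if m = fmin V then fmax V else fmax (V.filter fun x => x < m)

/-- The permutation `P_α` associated to a partition `α`, as a function: each block
`{i₁ < i₂ < ⋯ < iₘ}` becomes the cycle `i₁ ↦ i₂ ↦ ⋯ ↦ iₘ ↦ i₁`. -/
noncomputable def permOf (α : Finset (Finset ℕ)) (m : ℕ) : ℕ :=
  if m ∈ blockOf α m then nextInBlock (blockOf α m) m else m

/-- The inverse permutation `P_α⁻¹`, as a function. -/
noncomputable def permOfInv (α : Finset (Finset ℕ)) (m : ℕ) : ℕ :=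
  if m ∈ blockOf α m then prevInBlock (blockOf α m) m else m

/-- The action `τ·α` of a map `τ` on a partition `α = {V₁,…,V_p}`, giving
`{τ(V₁),…,τ(V_p)}`. -/
def mapPart (τ : ℕ → ℕ) (α : Finset (Finset ℕ)) : Finset (Finset ℕ) :=
  α.image fun V => V.image τ

/-- The cycled unlinking `π° := P_{π̂}⁻¹ · π̌`. -/
noncomputable def cycUnlink (π : Finset (Finset ℕ)) : Finset (Finset ℕ) :=
  mapPart (permOfInv (genPart π)) (unlink π)

/-- `NC(n)` as a finset. -/
noncomputable def NCF (n : ℕ) : Finset (Finset (Finset ℕ)) :=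
  ((Finset.Icc 1 n).powerset.powerset).filter (IsNCPartition n)

/-- `NCL(n)` as a finset. -/
noncomputable def NCLF (n : ℕ) : Finset (Finset (Finset ℕ)) :=
  ((Finset.Icc 1 n).powerset.powerset).filter (IsNCL n)

/-- The restriction `π|_E`: the blocks of `π` contained in `E`. -/
def restrictL (π : Finset (Finset ℕ)) (E : Finset ℕ) : Finset (Finset ℕ) :=
  π.filter fun A => A ⊆ E

/-- The partition `β₀` obtained from `β` by leaving blocks of size `≤ 2` intact and
breaking each block `W` with `|W| ≥ 3` into the doubleton `{min W, max W}` together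
with `|W| - 2` singletons. -/
noncomputable def breakBlocks (β : Finset (Finset ℕ)) : Finset (Finset ℕ) :=
  β.biUnion fun W =>
    if W.card ≤ 2 then {W}
    else insert {fmin W, fmax W} ((W \ {fmin W, fmax W}).image fun x => ({x} : Finset ℕ))

lemma fmin_mem' {A : Finset ℕ} (h : A.Nonempty) : fmin A ∈ A := by
  have h1 : (A : Set ℕ).Nonempty := by exact_mod_cast h
  exact_mod_cast Nat.sInf_mem h1

lemma fmax_mem' {A : Finset ℕ} (h : A.Nonempty) : fmax A ∈ A := by
  have h1 : (A : Set ℕ).Nonempty := by exact_mod_cast h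
  exact_mod_cast Nat.sSup_mem h1 A.finite_toSet.bddAbove

lemma fmin_le' {A : Finset ℕ} {m : ℕ} (h : m ∈ A) : fmin A ≤ m :=
  Nat.sInf_le (by exact_mod_cast h)

lemma le_fmax' {A : Finset ℕ} {m : ℕ} (h : m ∈ A) : m ≤ fmax A :=
  le_csSup A.finite_toSet.bddAbove (by exact_mod_cast h)

lemma blockOf_eq' {β : Finset (Finset ℕ)}
    (hd : ∀ V ∈ β, ∀ W ∈ β, V ≠ W → V ∩ W = ∅)
    {W : Finset ℕ} (hW : W ∈ β) {m : ℕ} (hm : m ∈ W) :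
    blockOf β m = W := by
  have hfilt : β.filter (fun V => m ∈ V) = {W} := by
    apply Finset.eq_singleton_iff_unique_mem.mpr
    refine ⟨Finset.mem_filter.mpr ⟨hW, hm⟩, ?_⟩
    intro V hV
    simp only [Finset.mem_filter] at hV
    by_contra hne
    have hint := hd V hV.1 W hW hne
    have : m ∈ V ∩ W := Finset.mem_inter.mpr ⟨hV.2, hm⟩
    rw [hint] at this
    exact absurd this (Finset.notMem_empty m)
  rw [blockOf, hfilt, Finset.sup_singleton, id]

/-- Let `α, β ∈ NC(n)` with `α ≪ β`. Then every outer block of `α` is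
`β`-special; moreover the correspondence `V ↦ W` (sending a `β`-special block `V` of `α`
to the block `W` of `β` with the same min and max, i.e. the block of `β` containing
`min V`) restricts to a bijection between the outer blocks of `α` and those of `β`. -/
theorem stmt8 (n : ℕ) (α β : Finset (Finset ℕ))
    (hα : IsNCPartition n α) (hβ : IsNCPartition n β) (hll : LL α β) :
    (∀ V ∈ α, OuterBlock α V → SpecialBlock β V) ∧
    Set.BijOn (fun V => blockOf β (fmin V))
      {V : Finset ℕ | V ∈ α ∧ OuterBlock α V}
      {W : Finset ℕ | W ∈ β ∧ OuterBlock β W} := by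
  obtain ⟨⟨hαne, hαsub, hαcov, hαdisj⟩, -⟩ := hα
  obtain ⟨⟨hβne, hβsub, hβcov, hβdisj⟩, -⟩ := hβ
  obtain ⟨href, hmm⟩ := hll
  have αeq : ∀ V ∈ α, ∀ V' ∈ α, ∀ m : ℕ, m ∈ V → m ∈ V' → V = V' := by
    intro V hV V' hV' m h1 h2
    by_contra hne
    have hint := hαdisj V hV V' hV' hne
    have : m ∈ V ∩ V' := Finset.mem_inter.mpr ⟨h1, h2⟩
    rw [hint] at this
    exact absurd this (Finset.notMem_empty m)
  have βeq : ∀ V ∈ β, ∀ V' ∈ β, ∀ m : ℕ, m ∈ V → m ∈ V' → V = V' := by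
    intro V hV V' hV' m h1 h2
    by_contra hne
    have hint := hβdisj V hV V' hV' hne
    have : m ∈ V ∩ V' := Finset.mem_inter.mpr ⟨h1, h2⟩
    rw [hint] at this
    exact absurd this (Finset.notMem_empty m)
  -- key fact about outer blocks of α
  have key : ∀ V ∈ α, OuterBlock α V →
      blockOf β (fmin V) ∈ β ∧ fmin (blockOf β (fmin V)) = fmin V ∧
      fmax (blockOf β (fmin V)) = fmax V := by
    intro V hV hout
    obtain ⟨W, hW, hVW⟩ := href V hV
    have hVne := hαne V hV
    have hminV : fmin V ∈ V := fmin_mem' hVne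
    have hmaxV : fmax V ∈ V := fmax_mem' hVne
    have hbo : blockOf β (fmin V) = W := blockOf_eq' hβdisj hW (hVW hminV)
    obtain ⟨V', hV', hminW', hmaxW'⟩ := hmm W hW
    have h1 : fmin W ≤ fmin V := fmin_le' (hVW hminV)
    have h2 : fmax V ≤ fmax W := le_fmax' (hVW hmaxV)
    have h3 : fmin V' ≤ fmin W := fmin_le' hminW'
    have h4 : fmax W ≤ fmax V' := le_fmax' hmaxW'
    have hVeq : V' = V := by
      rcases eq_or_lt_of_le (le_trans h3 h1) with h | h
      · exact αeq V' hV' V hV (fmin V') (fmin_mem' (hαne V' hV')) (h ▸ hminV)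
      · have hndn := hout V' hV'
        push_neg at hndn
        have h5 : fmax V' ≤ fmax V := hndn h
        have h6 : fmax V' = fmax V := le_antisymm h5 (le_trans h2 h4)
        exact αeq V' hV' V hV (fmax V') (fmax_mem' (hαne V' hV')) (h6 ▸ hmaxV)
    subst hVeq
    rw [hbo]
    exact ⟨hW, le_antisymm h1 h3, le_antisymm h4 h2⟩
  constructor
  · intro V hV hout
    obtain ⟨hWβ, hmin, hmax⟩ := key V hV hout
    exact ⟨blockOf β (fmin V), hWβ, hmin.symm, hmax.symm⟩
  · refine ⟨?_, ?_, ?_⟩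
    · -- MapsTo
      rintro V ⟨hV, hout⟩
      obtain ⟨hWβ, hmin, hmax⟩ := key V hV hout
      refine ⟨hWβ, ?_⟩
      intro W' hW' ⟨hlt1, hlt2⟩
      obtain ⟨V'', hV'', hm1, hm2⟩ := hmm W' hW'
      have : fmin V'' < fmin V := lt_of_le_of_lt (fmin_le' hm1) (hmin ▸ hlt1)
      have h2 : fmax V < fmax V'' := lt_of_lt_of_le (hmax ▸ hlt2) (le_fmax' hm2)
      exact hout V'' hV'' ⟨this, h2⟩
    · -- InjOn
      rintro V₁ ⟨hV₁, hout₁⟩ V₂ ⟨hV₂, hout₂⟩ heq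
      obtain ⟨-, hmin₁, -⟩ := key V₁ hV₁ hout₁
      obtain ⟨-, hmin₂, -⟩ := key V₂ hV₂ hout₂
      have hm : fmin V₁ = fmin V₂ := by
        rw [← hmin₁, ← hmin₂]
        simp only at heq
        rw [heq]
      exact αeq V₁ hV₁ V₂ hV₂ (fmin V₁) (fmin_mem' (hαne V₁ hV₁))
        (hm ▸ fmin_mem' (hαne V₂ hV₂))
    · -- SurjOn
      rintro W ⟨hW, hWout⟩
      obtain ⟨V, hV, hminW, hmaxW⟩ := hmm W hW
      obtain ⟨W'', hW'', hVW''⟩ := href V hV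
      have hWeq : W'' = W := βeq W'' hW'' W hW (fmin W) (hVW'' hminW)
        (fmin_mem' (hβne W hW))
      rw [hWeq] at hVW''
      have hVne := hαne V hV
      have hminV : fmin V = fmin W :=
        le_antisymm (fmin_le' hminW) (fmin_le' (hVW'' (fmin_mem' hVne)))
      have hmaxV : fmax V = fmax W :=
        le_antisymm (le_fmax' (hVW'' (fmax_mem' hVne))) (le_fmax' hmaxW)
      have hout : OuterBlock α V := by
        intro V' hV' ⟨hlt1, hlt2⟩
        obtain ⟨W', hW', hVW'⟩ := href V' hV'
        have hne' := hαne V' hV'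
        have h1 : fmin W' < fmin W :=
          lt_of_le_of_lt (fmin_le' (hVW' (fmin_mem' hne'))) (hminV ▸ hlt1)
        have h2 : fmax W < fmax W' :=
          lt_of_lt_of_le (hmaxV ▸ hlt2) (le_fmax' (hVW' (fmax_mem' hne')))
        exact hWout W' hW' ⟨h1, h2⟩
      refine ⟨V, ⟨hV, hout⟩, ?_⟩
      simp only
      rw [hminV]
      exact blockOf_eq' hβdisj hW (fmin_mem' (hβne W hW))
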